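/- For every non-negative integer d, the number of 2×2 matrices with non-negative integer entries whose entries sum to 2d, counted up to permutations of the rows and of the columns, equals ((d+1)³ + 2(d+1))/3. -/

import Mathlib

open MulAction Finset

private lemma myGaussSum2 (m : ℕ) : 2 * ∑ k ∈ Finset.range m, (k + 1) = m * (m + 1) := by
  induction m with
  | zero => simp
  | succ m ih => rw [Finset.sum_range_succ, Nat.mul_add, ih]; ring

private lemma cubeSum (n : ℕ) :
    6 * ∑ k ∈ Finset.range n, (k + 1) * (n - k) = n * (n + 1) * (n + 2) := by
  induction n with
  | zero => simp
  | succ n ih =>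
    have h : ∑ k ∈ Finset.range (n + 1), (k + 1) * (n + 1 - k)
        = (∑ k ∈ Finset.range (n + 1), (k + 1) * (n - k))
          + ∑ k ∈ Finset.range (n + 1), (k + 1) := by
      rw [← Finset.sum_add_distrib]
      refine Finset.sum_congr rfl fun k hk => ?_
      have hk' : k ≤ n := by simpa [Nat.lt_succ_iff] using hk
      have h2 : n + 1 - k = (n - k) + 1 := by omega
      rw [h2]; ring
    have h2 : ∑ k ∈ Finset.range (n + 1), (k + 1) * (n - k)
        = ∑ k ∈ Finset.range n, (k + 1) * (n - k) := by
      rw [Finset.sum_range_succ]; simp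
    have h3 := myGaussSum2 (n + 1)
    rw [h, h2, Nat.mul_add, ih]
    nlinarith [h3]

/-- 2×2 matrices over ℕ with entry sum `n`. -/
abbrev MatSum (n : ℕ) := {A : Matrix (Fin 2) (Fin 2) ℕ // ∑ i, ∑ j, A i j = n}

abbrev G2 := Equiv.Perm (Fin 2) × Equiv.Perm (Fin 2)

private lemma sum_perm (A : Matrix (Fin 2) (Fin 2) ℕ) (σ τ : Equiv.Perm (Fin 2)) :
    ∑ i, ∑ j, A (σ i) (τ j) = ∑ i, ∑ j, A i j := by
  rw [← Equiv.sum_comp σ (fun i => ∑ j, A i j)]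
  exact Finset.sum_congr rfl fun i _ => Equiv.sum_comp τ (A (σ i))

instance (n : ℕ) : MulAction G2 (MatSum n) where
  smul g A := ⟨fun i j => A.1 (g.1⁻¹ i) (g.2⁻¹ j), by
    rw [show (fun i j => A.1 (g.1⁻¹ i) (g.2⁻¹ j)) = fun i j => A.1 (g.1⁻¹ i) (g.2⁻¹ j) from rfl]
    rw [show (∑ i, ∑ j, A.1 (g.1⁻¹ i) (g.2⁻¹ j)) = ∑ i, ∑ j, A.1 i j from
      sum_perm A.1 g.1⁻¹ g.2⁻¹]
    exact A.2⟩
  one_smul A := Subtype.ext (by funext i j; rfl)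
  mul_smul g h A := Subtype.ext (by funext i j; rfl)

private lemma smul_val {n : ℕ} (g : G2) (A : MatSum n) (i j : Fin 2) :
    (g • A).1 i j = A.1 (g.1⁻¹ i) (g.2⁻¹ j) := rfl

instance matSumFinite (n : ℕ) : Finite (MatSum n) := by
  have hb : ∀ (A : MatSum n) (i j : Fin 2), A.1 i j < n + 1 := by
    intro A i j
    have h1 : A.1 i j ≤ ∑ j', A.1 i j' :=
      Finset.single_le_sum (fun _ _ => Nat.zero_le _) (Finset.mem_univ j)
    have h2 : (∑ j', A.1 i j') ≤ ∑ i', ∑ j', A.1 i' j' :=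
      Finset.single_le_sum (fun (i' : Fin 2) _ => Nat.zero_le (∑ j', A.1 i' j'))
        (Finset.mem_univ i)
    have h3 := A.2
    omega
  apply Finite.of_injective
    (fun A : MatSum n => (fun i j => (⟨A.1 i j, hb A i j⟩ : Fin (n + 1)) : Fin 2 → Fin 2 → Fin (n + 1)))
  intro A B h
  apply Subtype.ext; funext i j
  have h2 := congr_fun (congr_fun h i) j
  simpa using h2

/-- the quotient in `matCount` agrees with the orbit quotient. -/
private def quotEquiv (n : ℕ) :
    (Quot fun A B : MatSum n =>
      ∃ σ τ : Equiv.Perm (Fin 2),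
        ∀ i j, (B : Matrix (Fin 2) (Fin 2) ℕ) i j = (A : Matrix (Fin 2) (Fin 2) ℕ) (σ i) (τ j))
      ≃ Quotient (orbitRel G2 (MatSum n)) :=
  Quot.congrRight (by
    intro A B
    rw [orbitRel_apply, MulAction.mem_orbit_iff]
    constructor
    · rintro ⟨σ, τ, h⟩
      refine ⟨(σ, τ), Subtype.ext ?_⟩
      funext i j
      rw [smul_val]
      simp only
      rw [h]
      simp
    · rintro ⟨g, hg⟩
      refine ⟨g.1, g.2, fun i j => ?_⟩
      have h2 := congr_fun (congr_fun (congr_arg Subtype.val hg) (g.1 i)) (g.2 j)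
      rw [smul_val] at h2
      simp only [Equiv.Perm.inv_def, Equiv.symm_apply_apply] at h2
      exact h2)

private def pairEquiv (m : ℕ) : {p : ℕ × ℕ // p.1 + p.2 = m} ≃ Fin (m + 1) where
  toFun p := ⟨p.1.1, by have := p.2; omega⟩
  invFun k := ⟨(k.1, m - k.1), by have := k.2; omega⟩
  left_inv := by
    rintro ⟨⟨a, b⟩, h⟩
    apply Subtype.ext
    simp only at h
    have hb : m - a = b := by omega
    simp [hb]
  right_inv := by rintro ⟨k, hk⟩; rfl

private lemma pairCard (m : ℕ) : Nat.card {p : ℕ × ℕ // p.1 + p.2 = m} = m + 1 := by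
  rw [Nat.card_congr (pairEquiv m), Nat.card_eq_fintype_card, Fintype.card_fin]

private lemma sum_expand {n : ℕ} (A : MatSum n) :
    A.1 0 0 + A.1 0 1 + (A.1 1 0 + A.1 1 1) = n := by
  have h := A.2
  simpa [Fin.sum_univ_two] using h

private lemma fin2cases (i : Fin 2) : i = 0 ∨ i = 1 := by omega

/-- fiber over given first-row sum -/
private def fiberEquiv (n k : ℕ) (hk : k ≤ n) :
    {A : MatSum n // A.1 0 0 + A.1 0 1 = k}
      ≃ ({p : ℕ × ℕ // p.1 + p.2 = k} × {p : ℕ × ℕ // p.1 + p.2 = n - k}) where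
  toFun x := (⟨(x.1.1 0 0, x.1.1 0 1), x.2⟩,
    ⟨(x.1.1 1 0, x.1.1 1 1), by have := sum_expand x.1; have := x.2; omega⟩)
  invFun pq := ⟨⟨fun i j => if i = 0 then (if j = 0 then pq.1.1.1 else pq.1.1.2)
      else (if j = 0 then pq.2.1.1 else pq.2.1.2), by
        have h1 := pq.1.2; have h2 := pq.2.2
        simp [Fin.sum_univ_two]
        omega⟩, by simpa using pq.1.2⟩
  left_inv := by
    rintro ⟨⟨A, hA⟩, h⟩
    apply Subtype.ext; apply Subtype.ext
    funext i j
    simp only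
    rcases fin2cases i with hi | hi <;> rcases fin2cases j with hj | hj <;> subst hi <;> subst hj <;> simp
  right_inv := by
    rintro ⟨⟨⟨a, b⟩, hab⟩, ⟨⟨c, e⟩, hce⟩⟩
    simp only [Prod.mk.injEq]
    constructor <;> apply Subtype.ext <;> simp

private lemma cardMatSum (n : ℕ) :
    6 * Nat.card (MatSum n) = (n + 1) * (n + 2) * (n + 3) := by
  classical
  haveI : Fintype (MatSum n) := Fintype.ofFinite _
  have hfib : (Finset.univ : Finset (MatSum n)).card
      = ∑ k ∈ Finset.range (n + 1),
          (Finset.univ.filter fun A : MatSum n => A.1 0 0 + A.1 0 1 = k).card := by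
    apply Finset.card_eq_sum_card_fiberwise
    intro A _
    have := sum_expand A
    simp only [Finset.mem_range, Finset.coe_range, Set.mem_Iio]
    omega
  have hcards : ∀ k ∈ Finset.range (n + 1),
      (Finset.univ.filter fun A : MatSum n => A.1 0 0 + A.1 0 1 = k).card
        = (k + 1) * (n - k + 1) := by
    intro k hk
    have hk' : k ≤ n := by simpa [Nat.lt_succ_iff] using hk
    rw [← Fintype.card_subtype, ← Nat.card_eq_fintype_card,
      Nat.card_congr (fiberEquiv n k hk'), Nat.card_prod, pairCard, pairCard]
  have hsum : Nat.card (MatSum n) = ∑ k ∈ Finset.range (n + 1), (k + 1) * (n - k + 1) := by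
    rw [Nat.card_eq_fintype_card, ← Finset.card_univ, hfib]
    exact Finset.sum_congr rfl hcards
  have hshift : ∑ k ∈ Finset.range (n + 1), (k + 1) * (n - k + 1)
      = ∑ k ∈ Finset.range (n + 1), (k + 1) * ((n + 1) - k) := by
    refine Finset.sum_congr rfl fun k hk => ?_
    have : k ≤ n := by simpa [Nat.lt_succ_iff] using hk
    congr 1
    omega
  rw [hsum, hshift, cubeSum (n + 1)]

private lemma card_fixed_one (n : ℕ) :
    Nat.card ↥(fixedBy (MatSum n) ((1 : Equiv.Perm (Fin 2)), (1 : Equiv.Perm (Fin 2))))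
      = Nat.card (MatSum n) :=
  Nat.card_congr (Equiv.subtypeUnivEquiv fun x => one_smul G2 x)

private lemma fixed_entry {n : ℕ} (g : G2) (x : ↥(fixedBy (MatSum n) g)) (i j : Fin 2) :
    x.1.1 (g.1⁻¹ i) (g.2⁻¹ j) = x.1.1 i j := by
  have h := x.2
  rw [mem_fixedBy] at h
  have h2 := congr_fun (congr_fun (congr_arg Subtype.val h) i) j
  rw [smul_val] at h2
  exact h2

private lemma card_fixed_rowswap (d : ℕ) :
    Nat.card ↥(fixedBy (MatSum (2 * d)) ((Equiv.swap 0 1 : Equiv.Perm (Fin 2)), (1 : Equiv.Perm (Fin 2))))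
      = d + 1 := by
  rw [← pairCard d]
  apply Nat.card_congr
  refine ⟨fun x => ⟨(x.1.1 0 0, x.1.1 0 1), ?_⟩, fun p => ⟨⟨fun _ j => if j = 0 then p.1.1 else p.1.2, ?_⟩, ?_⟩, ?_, ?_⟩
  · -- sum condition
    have h1 := fixed_entry _ x 1 0
    have h2 := fixed_entry _ x 1 1
    simp only [Equiv.swap_inv, inv_one, Equiv.swap_apply_right, Equiv.Perm.one_apply] at h1 h2
    have h3 := sum_expand x.1
    omega
  · have := p.2
    simp [Fin.sum_univ_two]
    omega
  · rw [mem_fixedBy]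
    apply Subtype.ext
    funext i j
    rfl
  · rintro ⟨⟨A, hA⟩, hfix⟩
    apply Subtype.ext; apply Subtype.ext
    funext i j
    have h1 := fixed_entry (n := 2 * d) _ ⟨⟨A, hA⟩, hfix⟩ 1 0
    have h2 := fixed_entry (n := 2 * d) _ ⟨⟨A, hA⟩, hfix⟩ 1 1
    simp only [Equiv.swap_inv, inv_one, Equiv.swap_apply_right, Equiv.Perm.one_apply] at h1 h2
    simp only
    rcases fin2cases i with hi | hi <;> rcases fin2cases j with hj | hj <;>
      subst hi <;> subst hj <;> simp <;> omega
  · rintro ⟨⟨a, b⟩, h⟩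
    apply Subtype.ext
    simp

private lemma card_fixed_colswap (d : ℕ) :
    Nat.card ↥(fixedBy (MatSum (2 * d)) ((1 : Equiv.Perm (Fin 2)), (Equiv.swap 0 1 : Equiv.Perm (Fin 2))))
      = d + 1 := by
  rw [← pairCard d]
  apply Nat.card_congr
  refine ⟨fun x => ⟨(x.1.1 0 0, x.1.1 1 0), ?_⟩, fun p => ⟨⟨fun i _ => if i = 0 then p.1.1 else p.1.2, ?_⟩, ?_⟩, ?_, ?_⟩
  · have h1 := fixed_entry _ x 0 1
    have h2 := fixed_entry _ x 1 1
    simp only [Equiv.swap_inv, inv_one, Equiv.swap_apply_right, Equiv.Perm.one_apply] at h1 h2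
    have h3 := sum_expand x.1
    omega
  · have := p.2
    simp [Fin.sum_univ_two]
    omega
  · rw [mem_fixedBy]
    apply Subtype.ext
    funext i j
    rfl
  · rintro ⟨⟨A, hA⟩, hfix⟩
    apply Subtype.ext; apply Subtype.ext
    funext i j
    have h1 := fixed_entry (n := 2 * d) _ ⟨⟨A, hA⟩, hfix⟩ 0 1
    have h2 := fixed_entry (n := 2 * d) _ ⟨⟨A, hA⟩, hfix⟩ 1 1
    simp only [Equiv.swap_inv, inv_one, Equiv.swap_apply_right, Equiv.Perm.one_apply] at h1 h2
    simp only
    rcases fin2cases i with hi | hi <;> rcases fin2cases j with hj | hj <;>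
      subst hi <;> subst hj <;> simp <;> omega
  · rintro ⟨⟨a, b⟩, h⟩
    apply Subtype.ext
    simp

private lemma card_fixed_bothswap (d : ℕ) :
    Nat.card ↥(fixedBy (MatSum (2 * d)) ((Equiv.swap 0 1 : Equiv.Perm (Fin 2)), (Equiv.swap 0 1 : Equiv.Perm (Fin 2))))
      = d + 1 := by
  rw [← pairCard d]
  apply Nat.card_congr
  refine ⟨fun x => ⟨(x.1.1 0 0, x.1.1 0 1), ?_⟩, fun p => ⟨⟨fun i j => if i = j then p.1.1 else p.1.2, ?_⟩, ?_⟩, ?_, ?_⟩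
  · have h1 := fixed_entry _ x 1 1
    have h2 := fixed_entry _ x 1 0
    simp only [Equiv.swap_inv, Equiv.swap_apply_right, Equiv.swap_apply_left] at h1 h2
    have h3 := sum_expand x.1
    omega
  · have := p.2
    simp [Fin.sum_univ_two]
    omega
  · rw [mem_fixedBy]
    apply Subtype.ext
    funext i j
    rw [smul_val]
    simp only [Equiv.swap_inv]
    rcases fin2cases i with hi | hi <;> rcases fin2cases j with hj | hj <;>
      subst hi <;> subst hj <;> simp
  · rintro ⟨⟨A, hA⟩, hfix⟩
    apply Subtype.ext; apply Subtype.ext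
    funext i j
    have h1 := fixed_entry (n := 2 * d) _ ⟨⟨A, hA⟩, hfix⟩ 1 1
    have h2 := fixed_entry (n := 2 * d) _ ⟨⟨A, hA⟩, hfix⟩ 1 0
    simp only [Equiv.swap_inv, Equiv.swap_apply_right, Equiv.swap_apply_left] at h1 h2
    simp only
    rcases fin2cases i with hi | hi <;> rcases fin2cases j with hj | hj <;>
      subst hi <;> subst hj <;> simp <;> omega
  · rintro ⟨⟨a, b⟩, h⟩
    apply Subtype.ext
    simp

private lemma perm2_ne : (1 : Equiv.Perm (Fin 2)) ≠ Equiv.swap 0 1 := by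
  intro h
  have h2 := DFunLike.congr_fun h 0
  simp [Equiv.swap_apply_left] at h2

private lemma perm2_univ :
    (Finset.univ : Finset (Equiv.Perm (Fin 2))) = {1, Equiv.swap 0 1} := by
  symm
  apply Finset.eq_univ_of_card
  rw [Finset.card_pair perm2_ne, Fintype.card_perm, Fintype.card_fin]
  rfl

private lemma burnside (d : ℕ) :
    Nat.card (Quotient (orbitRel G2 (MatSum (2 * d)))) * 4
      = Nat.card (MatSum (2 * d)) + 3 * (d + 1) := by
  classical
  haveI : Fintype (MatSum (2 * d)) := Fintype.ofFinite _
  haveI hF : ∀ a : G2, Fintype ↥(fixedBy (MatSum (2 * d)) a) := fun a => Fintype.ofFinite _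
  haveI : Fintype (Quotient (orbitRel G2 (MatSum (2 * d)))) := Fintype.ofFinite _
  have hb := MulAction.sum_card_fixedBy_eq_card_orbits_mul_card_group G2 (MatSum (2 * d))
  have hG : Fintype.card G2 = 4 := by
    rw [Fintype.card_prod, Fintype.card_perm, Fintype.card_fin]
    rfl
  rw [hG] at hb
  have hsum : (∑ a : G2, Fintype.card ↥(fixedBy (MatSum (2 * d)) a))
      = Nat.card (MatSum (2 * d)) + 3 * (d + 1) := by
    rw [Fintype.sum_prod_type]
    rw [perm2_univ]
    rw [Finset.sum_pair perm2_ne, Finset.sum_pair perm2_ne, Finset.sum_pair perm2_ne]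
    have e1 : Fintype.card ↥(fixedBy (MatSum (2 * d)) ((1 : Equiv.Perm (Fin 2)), (1 : Equiv.Perm (Fin 2))))
        = Nat.card (MatSum (2 * d)) := by
      rw [← Nat.card_eq_fintype_card]; exact card_fixed_one (2 * d)
    have e2 : Fintype.card ↥(fixedBy (MatSum (2 * d)) ((1 : Equiv.Perm (Fin 2)), Equiv.swap (0 : Fin 2) 1))
        = d + 1 := by rw [← Nat.card_eq_fintype_card]; exact card_fixed_colswap d
    have e3 : Fintype.card ↥(fixedBy (MatSum (2 * d)) (Equiv.swap (0 : Fin 2) 1, (1 : Equiv.Perm (Fin 2))))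
        = d + 1 := by rw [← Nat.card_eq_fintype_card]; exact card_fixed_rowswap d
    have e4 : Fintype.card ↥(fixedBy (MatSum (2 * d)) ((Equiv.swap 0 1 : Equiv.Perm (Fin 2)), (Equiv.swap 0 1 : Equiv.Perm (Fin 2))))
        = d + 1 := by rw [← Nat.card_eq_fintype_card]; exact card_fixed_bothswap d
    rw [e1, e2, e3, e4]
    ring
  rw [hsum] at hb
  rw [Nat.card_eq_fintype_card]
  omega

/-- The number of `2 × 2` matrices with non-negative integer entries whose entries
sum to `d`, counted up to permutations of the rows and of the columns (i.e. the
number of orbits under the action of `Sym(2) × Sym(2)`). -/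
noncomputable def matCount (d : ℕ) : ℕ :=
  Nat.card (Quot fun A B : {A : Matrix (Fin 2) (Fin 2) ℕ // ∑ i, ∑ j, A i j = d} =>
    ∃ σ τ : Equiv.Perm (Fin 2),
      ∀ i j, (B : Matrix (Fin 2) (Fin 2) ℕ) i j = (A : Matrix (Fin 2) (Fin 2) ℕ) (σ i) (τ j))

/-- The number of non-negative integer `2 × 2` matrices whose entries sum to `2d`,
counted up to row and column permutations, equals `((d+1)³ + 2(d+1))/3`. -/
theorem matCount_even (d : ℕ) :
    matCount (2 * d) = ((d + 1) ^ 3 + 2 * (d + 1)) / 3 := by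
  have hq : matCount (2 * d) = Nat.card (Quotient (orbitRel G2 (MatSum (2 * d)))) :=
    Nat.card_congr (quotEquiv (2 * d))
  have h1 := burnside d
  have h2 := cardMatSum (2 * d)
  have e : (2 * d + 1) * (2 * d + 2) * (2 * d + 3) + 18 * (d + 1)
      = 8 * ((d + 1) ^ 3 + 2 * (d + 1)) := by ring
  rw [hq]
  have key : ∀ N Ω P X : ℕ, Ω * 4 = N + 3 * (d + 1) → 6 * N = P → P + 18 * (d + 1) = 8 * X →
      Ω = X / 3 := by intro N Ω P X hA hB hC; omega
  exact key _ _ _ _ h1 h2 e
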